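/- Let a, b ∈ m ⊂ ℂ[[x,y]], so that ω = a dx + b dy is a singular 1-form, and let φ(t) = (t^n, y(t)) with n ≥ 1 and ord_t y(t) ≥ n (the tangent cone of the branch Γ parametrized by φ is not x = 0). Set ȳ(t) = y(t)/t^n ∈ ℂ[[t]] and φ̄(t) = (t^n, ȳ(t)) (the strict transform parametrization under the blow-up π(x,y) = (x, x·y)), and define ā, b̄ ∈ ℂ[[x,y]] by ā(x,y) = (a(x, x·y) + y·b(x, x·y))/x — the numerator is divisible by x since a, b ∈ m — and b̄(x,y) = b(x, x·y), so that ω̄ = ā dx + b̄ dy is the pull-back form π*ω divided by x. Then ord_t( a(t^n,y(t))·n·t^{n−1} + b(t^n,y(t))·y'(t) ) = n + ord_t( ā(t^n,ȳ(t))·n·t^{n−1} + b̄(t^n,ȳ(t))·ȳ'(t) ) (as an identity in ℕ∞); equivalently υ_Γ(ω) = υ_{Γ̄}(ω̄) + n. -/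

import Mathlib

/-!
STATEMENT 8: behaviour of the contact of a singular 1-form with a branch under
one blow-up: `υ_Γ(ω) = υ_{Γ̄}(ω̄) + n`, stated as the order identity
`ord_t(a(φ)·n·t^{n−1} + b(φ)·y') = n + ord_t(ā(φ̄)·n·t^{n−1} + b̄(φ̄)·ȳ')`.

Substitution is defined via `tsum`; in every instance appearing below the
family of contributions to each coefficient has finite support (for the
original branch because `ord_t y ≥ n ≥ 1`, and for the strict transform because
`ā` and `b̄` come from the blow-up substitution, so the exponent of `y` in
their monomials is bounded by the exponent of `x` plus two), so the `tsum` is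
the honest (finite) sum.
-/

open PowerSeries

/-- Substitution of `(x(t), y(t))` into a two-variable formal power series,
coefficientwise via `tsum`. -/
noncomputable def substGen (xt yt : PowerSeries ℂ) (f : MvPowerSeries (Fin 2) ℂ) :
    PowerSeries ℂ :=
  PowerSeries.mk fun k =>
    ∑' ij : ℕ × ℕ,
      MvPowerSeries.coeff (Finsupp.single 0 ij.1 + Finsupp.single 1 ij.2) f *
        PowerSeries.coeff k (xt ^ ij.1 * yt ^ ij.2)

/-- The maximal ideal of `ℂ[[x,y]]`: series with zero constant term. -/
noncomputable def mIdeal : Ideal (MvPowerSeries (Fin 2) ℂ) :=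
  RingHom.ker (MvPowerSeries.constantCoeff : MvPowerSeries (Fin 2) ℂ →+* ℂ)

/-- Composition with the blow-up chart `(x, y) ↦ (x, x·y)`:
`f(x, x·y) = Σ c_{ij} x^{i+j} y^j`, so the coefficient of `x^p y^q` is
`c_{p−q, q}` when `q ≤ p`, and `0` otherwise. -/
noncomputable def blowSubst (f : MvPowerSeries (Fin 2) ℂ) : MvPowerSeries (Fin 2) ℂ :=
  fun d =>
    if d 1 ≤ d 0 then
      MvPowerSeries.coeff (Finsupp.single 0 (d 0 - d 1) + Finsupp.single 1 (d 1)) f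
    else 0

namespace BlowupAux

/-- Coefficient of `x^i y^j`. -/
noncomputable abbrev cf (i j : ℕ) (f : MvPowerSeries (Fin 2) ℂ) : ℂ :=
  MvPowerSeries.coeff (Finsupp.single 0 i + Finsupp.single 1 j) f

lemma apply0 (i j : ℕ) :
    ((Finsupp.single (0 : Fin 2) i + Finsupp.single 1 j : Fin 2 →₀ ℕ)) 0 = i := by
  simp [Finsupp.single_apply]

lemma apply1 (i j : ℕ) :
    ((Finsupp.single (0 : Fin 2) i + Finsupp.single 1 j : Fin 2 →₀ ℕ)) 1 = j := by
  simp [Finsupp.single_apply]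

lemma cf_blow (f : MvPowerSeries (Fin 2) ℂ) (i j : ℕ) :
    cf i j (blowSubst f) = if j ≤ i then cf (i - j) j f else 0 := by
  show MvPowerSeries.coeff _ (blowSubst f) = _
  rw [MvPowerSeries.coeff_apply]
  unfold blowSubst
  rw [apply0, apply1]

lemma cf_X0_mul (f : MvPowerSeries (Fin 2) ℂ) (i j : ℕ) :
    cf i j (MvPowerSeries.X (0 : Fin 2) * f) = if 1 ≤ i then cf (i - 1) j f else 0 := by
  show MvPowerSeries.coeff _ (MvPowerSeries.X (0 : Fin 2) * f) = _
  rw [show (MvPowerSeries.X (0 : Fin 2) : MvPowerSeries (Fin 2) ℂ)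
      = MvPowerSeries.monomial (Finsupp.single 0 1) 1 from MvPowerSeries.X_def 0,
    MvPowerSeries.coeff_monomial_mul]
  by_cases h : 1 ≤ i
  · have hd : ((Finsupp.single (0 : Fin 2) i + Finsupp.single 1 j : Fin 2 →₀ ℕ)
        - Finsupp.single 0 1) = Finsupp.single (0 : Fin 2) (i - 1) + Finsupp.single 1 j := by
      ext s
      fin_cases s <;> simp [Finsupp.tsub_apply, Finsupp.single_apply]
    have hcond : (Finsupp.single (0 : Fin 2) 1 : Fin 2 →₀ ℕ)
        ≤ Finsupp.single 0 i + Finsupp.single 1 j := by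
      rw [Finsupp.le_def]
      intro s
      fin_cases s <;> simp [Finsupp.single_apply, h]
    rw [if_pos hcond, if_pos h, one_mul, hd]
  · have hcond : ¬ ((Finsupp.single (0 : Fin 2) 1 : Fin 2 →₀ ℕ)
        ≤ Finsupp.single 0 i + Finsupp.single 1 j) := by
      intro hle
      exact h (by simpa [Finsupp.single_apply] using (Finsupp.le_def.mp hle) 0)
    rw [if_neg hcond, if_neg h]

lemma cf_X1_mul (f : MvPowerSeries (Fin 2) ℂ) (i j : ℕ) :
    cf i j (MvPowerSeries.X (1 : Fin 2) * f) = if 1 ≤ j then cf i (j - 1) f else 0 := by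
  show MvPowerSeries.coeff _ (MvPowerSeries.X (1 : Fin 2) * f) = _
  rw [show (MvPowerSeries.X (1 : Fin 2) : MvPowerSeries (Fin 2) ℂ)
      = MvPowerSeries.monomial (Finsupp.single 1 1) 1 from MvPowerSeries.X_def 1,
    MvPowerSeries.coeff_monomial_mul]
  by_cases h : 1 ≤ j
  · have hd : ((Finsupp.single (0 : Fin 2) i + Finsupp.single 1 j : Fin 2 →₀ ℕ)
        - Finsupp.single 1 1) = Finsupp.single (0 : Fin 2) i + Finsupp.single 1 (j - 1) := by
      ext s
      fin_cases s <;> simp [Finsupp.tsub_apply, Finsupp.single_apply]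
    have hcond : (Finsupp.single (1 : Fin 2) 1 : Fin 2 →₀ ℕ)
        ≤ Finsupp.single 0 i + Finsupp.single 1 j := by
      rw [Finsupp.le_def]
      intro s
      fin_cases s <;> simp [Finsupp.single_apply, h]
    rw [if_pos hcond, if_pos h, one_mul, hd]
  · have hcond : ¬ ((Finsupp.single (1 : Fin 2) 1 : Fin 2 →₀ ℕ)
        ≤ Finsupp.single 0 i + Finsupp.single 1 j) := by
      intro hle
      exact h (by simpa [Finsupp.single_apply] using (Finsupp.le_def.mp hle) 1)
    rw [if_neg hcond, if_neg h]

/-- Bounded `y`-degree relative to `x`-degree. -/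
def Bnd (m : ℕ) (g : MvPowerSeries (Fin 2) ℂ) : Prop :=
  ∀ i j : ℕ, i + m < j → cf i j g = 0

lemma term_vanish {m K k n : ℕ} (hn : 1 ≤ n) (hk : k ≤ K) {g : MvPowerSeries (Fin 2) ℂ}
    (hg : Bnd m g) (w : ℕ → PowerSeries ℂ) (ij : ℕ × ℕ)
    (h : ij ∉ Finset.range (K + 1) ×ˢ Finset.range (K + m + 1)) :
    cf ij.1 ij.2 g * PowerSeries.coeff k ((PowerSeries.X ^ n) ^ ij.1 * w ij.2) = 0 := by
  obtain ⟨i, j⟩ := ij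
  have hX : K < i → PowerSeries.coeff k ((PowerSeries.X ^ n) ^ i * w j) = 0 := by
    intro hi
    rw [← pow_mul, PowerSeries.coeff_X_pow_mul', if_neg]
    have := Nat.le_mul_of_pos_left i (show 0 < n by omega)
    omega
  simp only [Finset.mem_product, Finset.mem_range, not_and_or, not_lt] at h
  rcases h with hi | hj
  · rw [hX (by omega), mul_zero]
  · by_cases hij : i + m < j
    · rw [hg i j hij, zero_mul]
    · rw [hX (by omega), mul_zero]

lemma summable_fam {m k n : ℕ} (hn : 1 ≤ n) {g : MvPowerSeries (Fin 2) ℂ}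
    (hg : Bnd m g) (w : ℕ → PowerSeries ℂ) :
    Summable (fun ij : ℕ × ℕ =>
      cf ij.1 ij.2 g * PowerSeries.coeff k ((PowerSeries.X ^ n) ^ ij.1 * w ij.2)) :=
  summable_of_ne_finset_zero (s := Finset.range (k + 1) ×ˢ Finset.range (k + m + 1))
    (fun ij h => term_vanish hn le_rfl hg w ij h)

lemma coeff_substGen (xt yt : PowerSeries ℂ) (f : MvPowerSeries (Fin 2) ℂ) (k : ℕ) :
    PowerSeries.coeff k (substGen xt yt f) =
      ∑' ij : ℕ × ℕ, cf ij.1 ij.2 f * PowerSeries.coeff k (xt ^ ij.1 * yt ^ ij.2) := by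
  rw [substGen, PowerSeries.coeff_mk]

lemma coeff_substGen_sum {m K k n : ℕ} (hn : 1 ≤ n) (hk : k ≤ K)
    {g : MvPowerSeries (Fin 2) ℂ} (hg : Bnd m g) (yt : PowerSeries ℂ) :
    PowerSeries.coeff k (substGen (PowerSeries.X ^ n) yt g) =
      ∑ ij ∈ Finset.range (K + 1) ×ˢ Finset.range (K + m + 1),
        cf ij.1 ij.2 g * PowerSeries.coeff k ((PowerSeries.X ^ n) ^ ij.1 * yt ^ ij.2) := by
  rw [coeff_substGen]
  exact tsum_eq_sum (fun ij h => term_vanish hn hk hg (fun j => yt ^ j) ij h)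

lemma coeff_mul_subst {m k n : ℕ} (hn : 1 ≤ n) {g : MvPowerSeries (Fin 2) ℂ}
    (hg : Bnd m g) (yt : PowerSeries ℂ) :
    PowerSeries.coeff k (yt * substGen (PowerSeries.X ^ n) yt g) =
      ∑' ij : ℕ × ℕ,
        cf ij.1 ij.2 g * PowerSeries.coeff k ((PowerSeries.X ^ n) ^ ij.1 * yt ^ (ij.2 + 1)) := by
  rw [PowerSeries.coeff_mul]
  have h1 : ∀ p ∈ Finset.HasAntidiagonal.antidiagonal k,
      (PowerSeries.coeff p.1 yt) * PowerSeries.coeff p.2 (substGen (PowerSeries.X ^ n) yt g)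
        = ∑ ij ∈ Finset.range (k + 1) ×ˢ Finset.range (k + m + 1),
            (PowerSeries.coeff p.1 yt) *
              (cf ij.1 ij.2 g *
                PowerSeries.coeff p.2 ((PowerSeries.X ^ n) ^ ij.1 * yt ^ ij.2)) := by
    intro p hp
    have hp2 : p.2 ≤ k := by
      have := Finset.HasAntidiagonal.mem_antidiagonal.mp hp; omega
    rw [coeff_substGen_sum hn hp2 hg yt, Finset.mul_sum]
  rw [Finset.sum_congr rfl h1, Finset.sum_comm]
  have h2 : ∀ ij : ℕ × ℕ,
      (∑ p ∈ Finset.HasAntidiagonal.antidiagonal k, PowerSeries.coeff p.1 yt *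
        (cf ij.1 ij.2 g * PowerSeries.coeff p.2 ((PowerSeries.X ^ n) ^ ij.1 * yt ^ ij.2)))
      = cf ij.1 ij.2 g *
          PowerSeries.coeff k ((PowerSeries.X ^ n) ^ ij.1 * yt ^ (ij.2 + 1)) := by
    intro ij
    have hyt : ((PowerSeries.X : PowerSeries ℂ) ^ n) ^ ij.1 * yt ^ (ij.2 + 1)
        = yt * (((PowerSeries.X : PowerSeries ℂ) ^ n) ^ ij.1 * yt ^ ij.2) := by ring
    rw [hyt, PowerSeries.coeff_mul, Finset.mul_sum]
    exact Finset.sum_congr rfl (fun p _ => by ring)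
  rw [Finset.sum_congr rfl (fun ij _ => h2 ij)]
  exact (tsum_eq_sum (fun ij h => term_vanish hn le_rfl hg (fun j => yt ^ (j + 1)) ij h)).symm

lemma substGen_blow (n : ℕ) (f : MvPowerSeries (Fin 2) ℂ) (ybar : PowerSeries ℂ) :
    substGen (PowerSeries.X ^ n) ybar (blowSubst f)
      = substGen (PowerSeries.X ^ n) (PowerSeries.X ^ n * ybar) f := by
  ext k
  rw [coeff_substGen, coeff_substGen]
  have hinj : Function.Injective (fun ij : ℕ × ℕ => ((ij.1 + ij.2, ij.2) : ℕ × ℕ)) := by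
    rintro ⟨a1, a2⟩ ⟨b1, b2⟩ h
    simp only [Prod.mk.injEq] at h
    exact Prod.ext (by omega) (by omega)
  have hsupp : Function.support (fun pq : ℕ × ℕ => cf pq.1 pq.2 (blowSubst f) *
      PowerSeries.coeff k ((PowerSeries.X ^ n) ^ pq.1 * ybar ^ pq.2))
      ⊆ Set.range (fun ij : ℕ × ℕ => ((ij.1 + ij.2, ij.2) : ℕ × ℕ)) := by
    rintro ⟨p, q⟩ hpq
    have hqp : q ≤ p := by
      by_contra hq
      apply hpq
      simp only [cf_blow, if_neg hq, zero_mul]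
    exact ⟨(p - q, q), by simp [Nat.sub_add_cancel hqp]⟩
  refine ((hinj.tsum_eq hsupp).symm).trans (tsum_congr fun ij => ?_)
  rw [cf_blow, if_pos (Nat.le_add_left _ _), Nat.add_sub_cancel]
  congr 1
  rw [mul_pow]
  ring

lemma key (n : ℕ) (hn : 1 ≤ n) (a b abar : MvPowerSeries (Fin 2) ℂ)
    (habar : MvPowerSeries.X (0 : Fin 2) * abar =
      blowSubst a + MvPowerSeries.X (1 : Fin 2) * blowSubst b)
    (ybar : PowerSeries ℂ) :
    substGen (PowerSeries.X ^ n) ybar (blowSubst a) +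
        ybar * substGen (PowerSeries.X ^ n) ybar (blowSubst b)
      = PowerSeries.X ^ n * substGen (PowerSeries.X ^ n) ybar abar := by
  have hBa : Bnd 0 (blowSubst a) := fun i j h => by rw [cf_blow, if_neg (by omega)]
  have hBb : Bnd 0 (blowSubst b) := fun i j h => by rw [cf_blow, if_neg (by omega)]
  have hXb : Bnd 1 (MvPowerSeries.X (1 : Fin 2) * blowSubst b) := by
    intro i j h
    rw [cf_X1_mul, if_pos (by omega), cf_blow, if_neg (by omega)]
  ext k
  rw [map_add, coeff_substGen, coeff_mul_subst hn hBb ybar]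
  have e2inj : Function.Injective (fun ij : ℕ × ℕ => ((ij.1, ij.2 + 1) : ℕ × ℕ)) := by
    rintro ⟨a1, a2⟩ ⟨b1, b2⟩ h
    simp only [Prod.mk.injEq] at h
    exact Prod.ext (by omega) (by omega)
  have h2 : (∑' ij : ℕ × ℕ, cf ij.1 ij.2 (blowSubst b) *
        PowerSeries.coeff k ((PowerSeries.X ^ n) ^ ij.1 * ybar ^ (ij.2 + 1)))
      = ∑' pq : ℕ × ℕ, cf pq.1 pq.2 (MvPowerSeries.X (1 : Fin 2) * blowSubst b) *
          PowerSeries.coeff k ((PowerSeries.X ^ n) ^ pq.1 * ybar ^ pq.2) := by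
    have hsupp : Function.support (fun pq : ℕ × ℕ =>
        cf pq.1 pq.2 (MvPowerSeries.X (1 : Fin 2) * blowSubst b) *
        PowerSeries.coeff k ((PowerSeries.X ^ n) ^ pq.1 * ybar ^ pq.2))
        ⊆ Set.range (fun ij : ℕ × ℕ => ((ij.1, ij.2 + 1) : ℕ × ℕ)) := by
      rintro ⟨p, q⟩ hpq
      rcases Nat.eq_zero_or_pos q with hq | hq
      · exfalso
        apply hpq
        subst hq
        simp only [cf_X1_mul]
        norm_num
      · exact ⟨(p, q - 1), by simp [Nat.sub_add_cancel hq]⟩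
    refine (Eq.trans ?_ (e2inj.tsum_eq hsupp))
    refine tsum_congr fun ij => ?_
    rw [cf_X1_mul, if_pos (by omega), Nat.add_sub_cancel]
  rw [h2, ← Summable.tsum_add (summable_fam hn hBa (fun j => ybar ^ j))
    (summable_fam hn hXb (fun j => ybar ^ j))]
  have h3 : ∀ pq : ℕ × ℕ,
      cf pq.1 pq.2 (blowSubst a) *
          PowerSeries.coeff k ((PowerSeries.X ^ n) ^ pq.1 * ybar ^ pq.2) +
        cf pq.1 pq.2 (MvPowerSeries.X (1 : Fin 2) * blowSubst b) *
          PowerSeries.coeff k ((PowerSeries.X ^ n) ^ pq.1 * ybar ^ pq.2)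
      = cf pq.1 pq.2 (MvPowerSeries.X (0 : Fin 2) * abar) *
          PowerSeries.coeff k ((PowerSeries.X ^ n) ^ pq.1 * ybar ^ pq.2) := by
    intro pq
    rw [← add_mul, ← map_add, ← habar]
  rw [tsum_congr h3]
  -- reindex (i, j) ↦ (i + 1, j)
  have e1inj : Function.Injective (fun ij : ℕ × ℕ => ((ij.1 + 1, ij.2) : ℕ × ℕ)) := by
    rintro ⟨a1, a2⟩ ⟨b1, b2⟩ h
    simp only [Prod.mk.injEq] at h
    exact Prod.ext (by omega) (by omega)
  have hsupp1 : Function.support (fun pq : ℕ × ℕ =>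
      cf pq.1 pq.2 (MvPowerSeries.X (0 : Fin 2) * abar) *
      PowerSeries.coeff k ((PowerSeries.X ^ n) ^ pq.1 * ybar ^ pq.2))
      ⊆ Set.range (fun ij : ℕ × ℕ => ((ij.1 + 1, ij.2) : ℕ × ℕ)) := by
    rintro ⟨p, q⟩ hpq
    rcases Nat.eq_zero_or_pos p with hp | hp
    · exfalso
      apply hpq
      subst hp
      simp only [cf_X0_mul]
      norm_num
    · exact ⟨(p - 1, q), by simp [Nat.sub_add_cancel hp]⟩
  have h4 : (∑' pq : ℕ × ℕ, cf pq.1 pq.2 (MvPowerSeries.X (0 : Fin 2) * abar) *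
        PowerSeries.coeff k ((PowerSeries.X ^ n) ^ pq.1 * ybar ^ pq.2))
      = ∑' ij : ℕ × ℕ, cf ij.1 ij.2 abar *
          PowerSeries.coeff k ((PowerSeries.X ^ n) ^ (ij.1 + 1) * ybar ^ ij.2) := by
    refine ((e1inj.tsum_eq hsupp1).symm).trans (tsum_congr fun ij => ?_)
    rw [cf_X0_mul, if_pos (by omega), Nat.add_sub_cancel]
  rw [h4, PowerSeries.coeff_X_pow_mul']
  have h5 : ∀ ij : ℕ × ℕ,
      PowerSeries.coeff k ((PowerSeries.X ^ n) ^ (ij.1 + 1) * ybar ^ ij.2)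
      = if n ≤ k then
          PowerSeries.coeff (k - n) ((PowerSeries.X ^ n) ^ ij.1 * ybar ^ ij.2) else 0 := by
    intro ij
    rw [show ((PowerSeries.X : PowerSeries ℂ) ^ n) ^ (ij.1 + 1) * ybar ^ ij.2
        = PowerSeries.X ^ n * (((PowerSeries.X : PowerSeries ℂ) ^ n) ^ ij.1 * ybar ^ ij.2)
        by ring, PowerSeries.coeff_X_pow_mul']
  by_cases hk : n ≤ k
  · simp only [h5, if_pos hk, coeff_substGen]
  · simp only [h5, if_neg hk, mul_zero, tsum_zero]

lemma derivFun_X_pow (n : ℕ) (hn : 1 ≤ n) :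
    PowerSeries.derivativeFun ((PowerSeries.X : PowerSeries ℂ) ^ n)
      = PowerSeries.C (n : ℂ) * PowerSeries.X ^ (n - 1) := by
  ext k
  rw [show PowerSeries.derivativeFun ((PowerSeries.X : PowerSeries ℂ) ^ n)
      = PowerSeries.derivative ℂ (PowerSeries.X ^ n) from rfl,
    PowerSeries.coeff_derivative, PowerSeries.coeff_X_pow, PowerSeries.coeff_C_mul,
    PowerSeries.coeff_X_pow]
  by_cases h : k + 1 = n
  · rw [if_pos h, if_pos (by omega), one_mul, mul_one]
    exact_mod_cast congrArg (Nat.cast : ℕ → ℂ) h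
  · rw [if_neg h, if_neg (by omega), zero_mul, mul_zero]

end BlowupAux

open BlowupAux in
theorem contact_of_form_under_blowup
    (n : ℕ) (hn : 1 ≤ n)
    (a b : MvPowerSeries (Fin 2) ℂ) (ha : a ∈ mIdeal) (hb : b ∈ mIdeal)
    (y ybar : PowerSeries ℂ)
    (hybar : y = PowerSeries.X ^ n * ybar)
    (abar : MvPowerSeries (Fin 2) ℂ)
    (habar : MvPowerSeries.X (0 : Fin 2) * abar =
      blowSubst a + MvPowerSeries.X (1 : Fin 2) * blowSubst b) :
    PowerSeries.order
        (substGen (PowerSeries.X ^ n) y a *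
            (PowerSeries.C (n : ℂ) * PowerSeries.X ^ (n - 1)) +
          substGen (PowerSeries.X ^ n) y b * PowerSeries.derivativeFun y)
      = (n : ℕ∞) +
        PowerSeries.order
          (substGen (PowerSeries.X ^ n) ybar abar *
              (PowerSeries.C (n : ℂ) * PowerSeries.X ^ (n - 1)) +
            substGen (PowerSeries.X ^ n) ybar (blowSubst b) *
              PowerSeries.derivativeFun ybar) := by
  have hSa : substGen (PowerSeries.X ^ n) y a
      = substGen (PowerSeries.X ^ n) ybar (blowSubst a) := by
    rw [hybar, substGen_blow]
  have hSb : substGen (PowerSeries.X ^ n) y b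
      = substGen (PowerSeries.X ^ n) ybar (blowSubst b) := by
    rw [hybar, substGen_blow]
  have hkey := key n hn a b abar habar ybar
  have hder : PowerSeries.derivativeFun y
      = PowerSeries.C (n : ℂ) * PowerSeries.X ^ (n - 1) * ybar +
        PowerSeries.X ^ n * PowerSeries.derivativeFun ybar := by
    rw [hybar, PowerSeries.derivativeFun_mul, derivFun_X_pow n hn]
    simp only [smul_eq_mul]
    ring
  rw [hSa, hSb, hder]
  have hEq : substGen (PowerSeries.X ^ n) ybar (blowSubst a) *
        (PowerSeries.C (n : ℂ) * PowerSeries.X ^ (n - 1)) +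
      substGen (PowerSeries.X ^ n) ybar (blowSubst b) *
        (PowerSeries.C (n : ℂ) * PowerSeries.X ^ (n - 1) * ybar +
          PowerSeries.X ^ n * PowerSeries.derivativeFun ybar)
      = PowerSeries.X ^ n *
          (substGen (PowerSeries.X ^ n) ybar abar *
              (PowerSeries.C (n : ℂ) * PowerSeries.X ^ (n - 1)) +
            substGen (PowerSeries.X ^ n) ybar (blowSubst b) *
              PowerSeries.derivativeFun ybar) := by
    linear_combination (PowerSeries.C (n : ℂ) * PowerSeries.X ^ (n - 1)) * hkey
  rw [hEq, PowerSeries.order_mul, PowerSeries.order_X_pow]
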